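/- The lattices 𝓛(49; 1, 6, 15) and 𝓛(49; 1, 6, 20) in ℤ³ are ‖·‖₁*-isospectral: for every k ≥ 0 and z ∈ {0,1,2,3}, the number of vectors with one-norm k and exactly z zero coordinates is the same in both lattices. Moreover they are not ‖·‖₁-isometric. -/
import Mathlib

set_option maxRecDepth 10000

namespace Lattice49

/-! ### Decomposition of a nonzero integer into (cube part, quotient) -/

def rep (m : ℤ) : ℤ := (m - 1) % 49 + 1

def ycomp (a : ℤ) : ℤ := if 0 ≤ a then rep a else -rep (-a)

def ncomp (a : ℤ) : ℤ := if 0 ≤ a then (a - rep a) / 49 else (-a - rep (-a)) / 49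

def recomp (y n : ℤ) : ℤ := if 0 ≤ y then y + 49 * n else y - 49 * n

lemma ycomp_ne (a : ℤ) : ycomp a ≠ 0 := by
  unfold ycomp rep; split <;> omega

lemma ycomp_natAbs_le (a : ℤ) : (ycomp a).natAbs ≤ 49 := by
  unfold ycomp rep; split <;> omega

lemma ycomp_pos {a : ℤ} (ha : a ≠ 0) : 0 < ycomp a ↔ 0 < a := by
  unfold ycomp rep; split <;> omega

lemma ycomp_dvd (a : ℤ) : 49 ∣ a - ycomp a := by
  unfold ycomp rep; split <;> omega

lemma ncomp_nonneg {a : ℤ} (ha : a ≠ 0) : 0 ≤ ncomp a := by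
  unfold ncomp rep; split <;> omega

lemma recomp_ycomp_ncomp {a : ℤ} (ha : a ≠ 0) : recomp (ycomp a) (ncomp a) = a := by
  unfold recomp ycomp ncomp rep; split <;> split <;> omega

lemma natAbs_decomp {a : ℤ} (ha : a ≠ 0) :
    a.natAbs = (ycomp a).natAbs + 49 * (ncomp a).toNat := by
  unfold ycomp ncomp rep; split <;> omega

section
variable {y n : ℤ} (hy : y ≠ 0) (hy49 : y.natAbs ≤ 49) (hn : 0 ≤ n)
include hy hy49 hn

lemma ycomp_recomp : ycomp (recomp y n) = y := by
  unfold ycomp recomp rep; split <;> split <;> omega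

lemma ncomp_recomp : ncomp (recomp y n) = n := by
  unfold ncomp recomp rep; split <;> split <;> omega

lemma recomp_ne : recomp y n ≠ 0 := by
  unfold recomp; split <;> omega

lemma recomp_pos : 0 < recomp y n ↔ 0 < y := by
  unfold recomp; split <;> omega

lemma recomp_natAbs : (recomp y n).natAbs = y.natAbs + 49 * n.toNat := by
  unfold recomp; split <;> omega

end

lemma recomp_dvd (y n : ℤ) : 49 ∣ recomp y n - y := by
  unfold recomp; split <;> omega

/-! ### Indexing the "cube" [-49,49] \ {0} by Fin 98 -/

def emb (i : Fin 98) : ℤ := if (i : ℕ) < 49 then (i : ℤ) - 49 else (i : ℤ) - 48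

def idx (y : ℤ) : Fin 98 :=
  ⟨(if y < 0 then y + 49 else y + 48).toNat % 98, Nat.mod_lt _ (by norm_num)⟩

lemma emb_ne (i : Fin 98) : emb i ≠ 0 := by
  unfold emb; have := i.isLt; split <;> omega

lemma emb_natAbs_le (i : Fin 98) : (emb i).natAbs ≤ 49 := by
  unfold emb; have := i.isLt; split <;> omega

lemma idx_emb (i : Fin 98) : idx (emb i) = i := by
  unfold idx emb; have := i.isLt
  apply Fin.ext
  simp only
  split <;> split <;> omega

lemma emb_idx {y : ℤ} (hy : y ≠ 0) (hy49 : y.natAbs ≤ 49) : emb (idx y) = y := by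
  unfold idx emb
  simp only
  split <;> split <;> omega

/-! ### Solving for the first coordinate -/

def solw (w x2 x3 : ℤ) (c : Bool) : ℤ :=
  let r := (-(6 * x2 + w * x3)) % 49
  if c then (if r = 0 then 49 else r) else r - 49

section
variable (w x2 x3 : ℤ) (c : Bool)

lemma solw_ne : solw w x2 x3 c ≠ 0 := by
  unfold solw; cases c <;> simp <;> try split
  all_goals omega

lemma solw_natAbs_le : (solw w x2 x3 c).natAbs ≤ 49 := by
  unfold solw; cases c <;> simp <;> try split
  all_goals omega

lemma solw_dvd : 49 ∣ solw w x2 x3 c + (6 * x2 + w * x3) := by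
  unfold solw; cases c <;> simp <;> try split
  all_goals omega

lemma solw_pos : 0 < solw w x2 x3 c ↔ c = true := by
  unfold solw; cases c <;> simp <;> try split
  all_goals omega

end

lemma solw_unique {w x2 x3 y : ℤ} (hy : y ≠ 0) (hy49 : y.natAbs ≤ 49)
    (hd : 49 ∣ y + (6 * x2 + w * x3)) : solw w x2 x3 (decide (0 < y)) = y := by
  by_cases h : 0 < y <;> simp [h] <;> unfold solw <;> simp <;> try split
  all_goals omega

/-! ### The finite matching -/

abbrev X := Fin 98 × Fin 98 × Bool

def uw (w : ℤ) (p : X) : ℕ :=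
  (solw w (emb p.1) (emb p.2.1) p.2.2).natAbs + (emb p.1).natAbs + (emb p.2.1).natAbs

lemma uw_lt (w : ℤ) (p : X) : uw w p < 148 := by
  have h1 := solw_natAbs_le w (emb p.1) (emb p.2.1) p.2.2
  have h2 := emb_natAbs_le p.1
  have h3 := emb_natAbs_le p.2.1
  unfold uw; omega

set_option maxRecDepth 1000000 in
set_option maxHeartbeats 4000000 in
theorem key : (∑ i : Fin 98, ∑ j : Fin 98, ∑ c : Bool, 1048576 ^ uw 15 (i, j, c)) =
    (∑ i : Fin 98, ∑ j : Fin 98, ∑ c : Bool, 1048576 ^ uw 20 (i, j, c)) := by decide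

/-! ### Digit extraction: from the packed sum to fiberwise counts -/

lemma digit_unique :
    ∀ (n : ℕ) (f g : ℕ → ℕ), (∀ R, f R < 1048576) → (∀ R, g R < 1048576) →
    (∑ R ∈ Finset.range n, f R * 1048576 ^ R) = (∑ R ∈ Finset.range n, g R * 1048576 ^ R) →
    ∀ R < n, f R = g R := by
  set B : ℕ := 1048576 with hB
  intro n
  induction n with
  | zero => intro f g _ _ _ R hR; omega
  | succ n ih =>
    intro f g hf hg h R hR
    rw [Finset.sum_range_succ', Finset.sum_range_succ'] at h
    simp only [pow_succ, pow_zero, mul_one] at h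
    have h' : (∑ R ∈ Finset.range n, f (R + 1) * B ^ R) * B + f 0 =
        (∑ R ∈ Finset.range n, g (R + 1) * B ^ R) * B + g 0 := by
      rw [Finset.sum_mul, Finset.sum_mul]
      convert h using 3 <;> ring
    set S := ∑ R ∈ Finset.range n, f (R + 1) * B ^ R with hS
    set T := ∑ R ∈ Finset.range n, g (R + 1) * B ^ R with hT
    have hf0 := hf 0
    have hg0 := hg 0
    have hST : S = T ∧ f 0 = g 0 := by rw [hB] at h' hf0 hg0; constructor <;> omega
    rcases R with _ | R
    · exact hST.2
    · exact ih (fun R => f (R + 1)) (fun R => g (R + 1)) (fun R => hf _) (fun R => hg _)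
        hST.1 R (by omega)

lemma packed_eq (w : ℤ) :
    (∑ i : Fin 98, ∑ j : Fin 98, ∑ c : Bool, 1048576 ^ uw w (i, j, c)) =
    ∑ R ∈ Finset.range 148,
      (Finset.univ.filter fun x : X => uw w x = R).card * 1048576 ^ R := by
  have h1 : (∑ p : X, 1048576 ^ uw w p) =
      ∑ i : Fin 98, ∑ j : Fin 98, ∑ c : Bool, 1048576 ^ uw w (i, j, c) := by
    rw [Fintype.sum_prod_type]
    exact Finset.sum_congr rfl fun i _ =>
      Fintype.sum_prod_type (f := fun q : Fin 98 × Bool => 1048576 ^ uw w (i, q))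
  rw [← h1]
  rw [← Finset.sum_fiberwise_of_maps_to (g := fun x : X => uw w x)
    (fun x _ => Finset.mem_range.2 (uw_lt w x))]
  refine Finset.sum_congr rfl fun R _ => ?_
  rw [Finset.sum_congr rfl (fun x hx => by
    rw [(Finset.mem_filter.1 hx).2]), Finset.sum_const, smul_eq_mul]

lemma hfib : ∀ R : ℕ, (Finset.univ.filter fun x : X => uw 15 x = R).card =
    (Finset.univ.filter fun x : X => uw 20 x = R).card := by
  have hcardlt : ∀ (w : ℤ) (R : ℕ),
      (Finset.univ.filter fun x : X => uw w x = R).card < 1048576 := by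
    intro w R
    calc (Finset.univ.filter fun x : X => uw w x = R).card
        ≤ (Finset.univ : Finset X).card := Finset.card_filter_le _ _
      _ = 19208 := by rw [Finset.card_univ]; simp [Fintype.card_prod]
      _ < 1048576 := by norm_num
  intro R
  by_cases hR : R < 148
  · refine digit_unique 148 _ _ (hcardlt 15) (hcardlt 20) ?_ R hR
    rw [← packed_eq, ← packed_eq]
    exact key
  · have h15 : (Finset.univ.filter fun x : X => uw 15 x = R) = ∅ := by
      refine Finset.filter_false_of_mem fun x _ => ?_
      have := uw_lt 15 x; omega
    have h20 : (Finset.univ.filter fun x : X => uw 20 x = R) = ∅ := by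
      refine Finset.filter_false_of_mem fun x _ => ?_
      have := uw_lt 20 x; omega
    rw [h15, h20]

lemma exists_matching {α β : Type} [Fintype α] [Fintype β] (u : α → ℕ) (v : β → ℕ)
    (h : ∀ R : ℕ, (Finset.univ.filter fun x => u x = R).card =
      (Finset.univ.filter fun y => v y = R).card) :
    ∃ e : α ≃ β, ∀ x, v (e x) = u x := by
  have step : ∀ R : ℕ, {x : α // u x = R} ≃ {y : β // v y = R} := fun R =>
    Fintype.equivOfCardEq (by
      rw [Fintype.card_subtype, Fintype.card_subtype]; exact h R)
  refine ⟨(Equiv.sigmaFiberEquiv u).symm.trans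
    ((Equiv.sigmaCongrRight step).trans (Equiv.sigmaFiberEquiv v)), fun x => ?_⟩
  exact (step (u x) ⟨x, rfl⟩).2

noncomputable def gma : X ≃ X := (exists_matching (uw 15) (uw 20) hfib).choose

lemma gma_spec : ∀ x, uw 20 (gma x) = uw 15 x :=
  (exists_matching (uw 15) (uw 20) hfib).choose_spec

lemma gma_symm_spec : ∀ x, uw 15 (gma.symm x) = uw 20 x := fun x => by
  have := gma_spec (gma.symm x)
  rw [Equiv.apply_symm_apply] at this
  exact this.symm

/-! ### The main piece of the bijection (all coordinates nonzero) -/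

def out (w' : ℤ) (x : X) (a : Fin 3 → ℤ) : Fin 3 → ℤ :=
  ![recomp (solw w' (emb x.1) (emb x.2.1) x.2.2) (ncomp (a 0)),
    recomp (emb x.1) (ncomp (a 1)),
    recomp (emb x.2.1) (ncomp (a 2))]

def inX (a : Fin 3 → ℤ) : X := (idx (ycomp (a 1)), idx (ycomp (a 2)), decide (0 < a 0))

def mainF (w' : ℤ) (e : X ≃ X) (a : Fin 3 → ℤ) : Fin 3 → ℤ := out w' (e (inX a)) a

lemma out_0 (w' : ℤ) (x : X) (a : Fin 3 → ℤ) :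
    out w' x a 0 = recomp (solw w' (emb x.1) (emb x.2.1) x.2.2) (ncomp (a 0)) := rfl
lemma out_1 (w' : ℤ) (x : X) (a : Fin 3 → ℤ) :
    out w' x a 1 = recomp (emb x.1) (ncomp (a 1)) := rfl
lemma out_2 (w' : ℤ) (x : X) (a : Fin 3 → ℤ) :
    out w' x a 2 = recomp (emb x.2.1) (ncomp (a 2)) := rfl

section
variable {w : ℤ} {a : Fin 3 → ℤ} (h0 : a 0 ≠ 0) (h1 : a 1 ≠ 0) (h2 : a 2 ≠ 0)

include h0 h1 h2 in
lemma sol_inX (hd : (49:ℤ) ∣ (a 0 + 6 * a 1 + w * a 2)) :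
    solw w (ycomp (a 1)) (ycomp (a 2)) (decide (0 < a 0)) = ycomp (a 0) := by
  have hdec : decide (0 < a 0) = decide (0 < ycomp (a 0)) :=
    decide_eq_decide.mpr (ycomp_pos h0).symm
  rw [hdec]
  refine solw_unique (ycomp_ne _) (ycomp_natAbs_le _) ?_
  have d0 := ycomp_dvd (a 0)
  have d1 : (49:ℤ) ∣ 6 * (a 1 - ycomp (a 1)) := (ycomp_dvd (a 1)).mul_left 6
  have d2 : (49:ℤ) ∣ w * (a 2 - ycomp (a 2)) := (ycomp_dvd (a 2)).mul_left w
  have key := dvd_sub hd (dvd_add d0 (dvd_add d1 d2))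
  have hre : (a 0 + 6 * a 1 + w * a 2) -
      ((a 0 - ycomp (a 0)) + (6 * (a 1 - ycomp (a 1)) + w * (a 2 - ycomp (a 2)))) =
      ycomp (a 0) + (6 * ycomp (a 1) + w * ycomp (a 2)) := by ring
  rwa [hre] at key

include h0 h1 h2 in
lemma uw_inX (hd : (49:ℤ) ∣ (a 0 + 6 * a 1 + w * a 2)) :
    uw w (inX a) = (ycomp (a 0)).natAbs + (ycomp (a 1)).natAbs + (ycomp (a 2)).natAbs := by
  unfold uw inX
  simp only
  rw [emb_idx (ycomp_ne _) (ycomp_natAbs_le _), emb_idx (ycomp_ne _) (ycomp_natAbs_le _),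
    sol_inX h0 h1 h2 hd]

include h0 h1 h2 in
lemma out_ne (w' : ℤ) (x : X) : ∀ j, out w' x a j ≠ 0 := by
  intro j
  fin_cases j
  · show out w' x a 0 ≠ 0
    rw [out_0]; exact recomp_ne (solw_ne _ _ _ _) (solw_natAbs_le _ _ _ _) (ncomp_nonneg h0)
  · show out w' x a 1 ≠ 0
    rw [out_1]; exact recomp_ne (emb_ne _) (emb_natAbs_le _) (ncomp_nonneg h1)
  · show out w' x a 2 ≠ 0
    rw [out_2]; exact recomp_ne (emb_ne _) (emb_natAbs_le _) (ncomp_nonneg h2)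

lemma out_mem (w' : ℤ) (x : X) :
    (49:ℤ) ∣ (out w' x a 0 + 6 * out w' x a 1 + w' * out w' x a 2) := by
  rw [out_0, out_1, out_2]
  set y0 := solw w' (emb x.1) (emb x.2.1) x.2.2 with hy0
  have ds := solw_dvd w' (emb x.1) (emb x.2.1) x.2.2
  have r0 := recomp_dvd y0 (ncomp (a 0))
  have r1 : (49:ℤ) ∣ 6 * (recomp (emb x.1) (ncomp (a 1)) - emb x.1) :=
    (recomp_dvd _ _).mul_left 6
  have r2 : (49:ℤ) ∣ w' * (recomp (emb x.2.1) (ncomp (a 2)) - emb x.2.1) :=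
    (recomp_dvd _ _).mul_left w'
  have key := dvd_add ds (dvd_add r0 (dvd_add r1 r2))
  have hre : (y0 + (6 * emb x.1 + w' * emb x.2.1)) + ((recomp y0 (ncomp (a 0)) - y0) +
      (6 * (recomp (emb x.1) (ncomp (a 1)) - emb x.1) +
       w' * (recomp (emb x.2.1) (ncomp (a 2)) - emb x.2.1))) =
      recomp y0 (ncomp (a 0)) + 6 * recomp (emb x.1) (ncomp (a 1)) +
        w' * recomp (emb x.2.1) (ncomp (a 2)) := by ring
  rwa [hre] at key

include h0 h1 h2 in
lemma out_norm (w' : ℤ) (x : X) :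
    (out w' x a 0).natAbs + (out w' x a 1).natAbs + (out w' x a 2).natAbs =
      uw w' x + 49 * ((ncomp (a 0)).toNat + (ncomp (a 1)).toNat + (ncomp (a 2)).toNat) := by
  rw [out_0, out_1, out_2,
    recomp_natAbs (solw_ne _ _ _ _) (solw_natAbs_le _ _ _ _) (ncomp_nonneg h0),
    recomp_natAbs (emb_ne _) (emb_natAbs_le _) (ncomp_nonneg h1),
    recomp_natAbs (emb_ne _) (emb_natAbs_le _) (ncomp_nonneg h2)]
  unfold uw
  ring

include h0 h1 h2 in
lemma inX_out (w' : ℤ) (x : X) : inX (out w' x a) = x := by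
  unfold inX
  rw [out_0, out_1, out_2,
    ycomp_recomp (emb_ne _) (emb_natAbs_le _) (ncomp_nonneg h1),
    ycomp_recomp (emb_ne _) (emb_natAbs_le _) (ncomp_nonneg h2),
    idx_emb, idx_emb]
  have hpos : 0 < recomp (solw w' (emb x.1) (emb x.2.1) x.2.2) (ncomp (a 0)) ↔ x.2.2 = true := by
    rw [recomp_pos (solw_ne _ _ _ _) (solw_natAbs_le _ _ _ _) (ncomp_nonneg h0)]
    exact solw_pos _ _ _ _
  have : decide (0 < recomp (solw w' (emb x.1) (emb x.2.1) x.2.2) (ncomp (a 0))) = x.2.2 := by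
    cases hb : x.2.2 <;> rw [hb] at hpos <;> simp [hpos]
  rw [this]

include h0 h1 h2 in
lemma ncomp_out (w' : ℤ) (x : X) : ∀ j, ncomp (out w' x a j) = ncomp (a j) := by
  intro j
  fin_cases j
  · show ncomp (out w' x a 0) = ncomp (a 0)
    rw [out_0]; exact ncomp_recomp (solw_ne _ _ _ _) (solw_natAbs_le _ _ _ _) (ncomp_nonneg h0)
  · show ncomp (out w' x a 1) = ncomp (a 1)
    rw [out_1]; exact ncomp_recomp (emb_ne _) (emb_natAbs_le _) (ncomp_nonneg h1)
  · show ncomp (out w' x a 2) = ncomp (a 2)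
    rw [out_2]; exact ncomp_recomp (emb_ne _) (emb_natAbs_le _) (ncomp_nonneg h2)

end

lemma vec3_0 (x y z : ℤ) : (![x, y, z]) 0 = x := rfl
lemma vec3_1 (x y z : ℤ) : (![x, y, z]) 1 = y := rfl
lemma vec3_2 (x y z : ℤ) : (![x, y, z]) 2 = z := rfl

lemma mainF_eq (w' : ℤ) (e : X ≃ X) (a : Fin 3 → ℤ) :
    mainF w' e a = out w' (e (inX a)) a := rfl

section
variable {w w' : ℤ} {e : X ≃ X} {a : Fin 3 → ℤ}
  (h0 : a 0 ≠ 0) (h1 : a 1 ≠ 0) (h2 : a 2 ≠ 0)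
  (hd : (49:ℤ) ∣ (a 0 + 6 * a 1 + w * a 2))

include h0 h1 h2 hd in
lemma main_norm (he : ∀ x, uw w' (e x) = uw w x) :
    (mainF w' e a 0).natAbs + (mainF w' e a 1).natAbs + (mainF w' e a 2).natAbs =
      (a 0).natAbs + (a 1).natAbs + (a 2).natAbs := by
  rw [mainF_eq]
  rw [out_norm h0 h1 h2 w' (e (inX a))]
  rw [he (inX a), uw_inX h0 h1 h2 hd]
  have e0 := natAbs_decomp h0
  have e1 := natAbs_decomp h1
  have e2 := natAbs_decomp h2
  omega

include h0 h1 h2 hd in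
lemma main_main : mainF w e.symm (mainF w' e a) = a := by
  have hb := out_ne h0 h1 h2 (a := a) w' (e (inX a))
  rw [mainF_eq, mainF_eq, inX_out h0 h1 h2, Equiv.symm_apply_apply]
  have hnc := ncomp_out h0 h1 h2 (a := a) w' (e (inX a))
  have hemb1 : emb (inX a).1 = ycomp (a 1) := emb_idx (ycomp_ne _) (ycomp_natAbs_le _)
  have hemb2 : emb (inX a).2.1 = ycomp (a 2) := emb_idx (ycomp_ne _) (ycomp_natAbs_le _)
  have hc : (inX a).2.2 = decide (0 < a 0) := rfl
  funext j
  fin_cases j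
  · show out w (inX a) (out w' (e (inX a)) a) 0 = a 0
    rw [out_0, hnc 0, hemb1, hemb2, hc, sol_inX h0 h1 h2 hd, recomp_ycomp_ncomp h0]
  · show out w (inX a) (out w' (e (inX a)) a) 1 = a 1
    rw [out_1, hnc 1, hemb1, recomp_ycomp_ncomp h1]
  · show out w (inX a) (out w' (e (inX a)) a) 2 = a 2
    rw [out_2, hnc 2, hemb2, recomp_ycomp_ncomp h2]

end

lemma zc_eq (b : Fin 3 → ℤ) : (Finset.univ.filter fun j => b j = 0).card =
    (if b 0 = 0 then 1 else 0) + (if b 1 = 0 then 1 else 0) + (if b 2 = 0 then 1 else 0) := by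
  rw [show (Finset.univ : Finset (Fin 3)) = {0, 1, 2} from rfl]
  rw [Finset.filter_insert, Finset.filter_insert, Finset.filter_singleton]
  split_ifs <;> simp_all [Finset.card_insert_of_notMem]

/-! ### The global map -/

def Fw (w' : ℤ) (e : X ≃ X) (a : Fin 3 → ℤ) : Fin 3 → ℤ :=
  if a 0 ≠ 0 ∧ a 1 ≠ 0 ∧ a 2 ≠ 0 then mainF w' e a
  else if a 0 ≠ 0 ∧ a 1 ≠ 0 then a
  else if a 0 ≠ 0 ∧ a 2 ≠ 0 then ![0, a 2, a 0]
  else if a 1 ≠ 0 ∧ a 2 ≠ 0 then ![a 2, 0, a 1]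
  else a

section
variable {w w' : ℤ} {e : X ≃ X}
  (he : ∀ x, uw w' (e x) = uw w x)
  (hB : ∀ u v : ℤ, (49:ℤ) ∣ u + w * v → (49:ℤ) ∣ 6 * v + w' * u)
  (hC : ∀ u v : ℤ, (49:ℤ) ∣ 6 * u + w * v → (49:ℤ) ∣ v + w' * u)
  (hD : ∀ v : ℤ, (49:ℤ) ∣ w * v → (49:ℤ) ∣ w' * v)
  {a : Fin 3 → ℤ} (hd : (49:ℤ) ∣ (a 0 + 6 * a 1 + w * a 2))

include hB hC hD hd in
lemma Fw_mem : (49:ℤ) ∣ (Fw w' e a 0 + 6 * Fw w' e a 1 + w' * Fw w' e a 2) := by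
  unfold Fw
  split_ifs with hA h1 h2 h3
  · exact out_mem w' (e (inX a))
  · have ha2 : a 2 = 0 := by tauto
    rw [ha2] at hd ⊢
    rw [mul_zero] at hd ⊢
    exact hd
  · have ha1 : a 1 = 0 := by tauto
    rw [vec3_0, vec3_1, vec3_2]
    rw [ha1] at hd
    rw [mul_zero, add_zero] at hd
    have := hB (a 0) (a 2) hd
    omega
  · have ha0 : a 0 = 0 := by tauto
    rw [vec3_0, vec3_1, vec3_2]
    rw [ha0] at hd
    rw [zero_add] at hd
    have := hC (a 1) (a 2) hd
    omega
  · -- at most one nonzero coordinate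
    by_cases z0 : a 0 = 0 <;> by_cases z1 : a 1 = 0 <;> by_cases z2 : a 2 = 0 <;>
      [skip; skip; skip; skip; skip; skip; skip; exact absurd ⟨z0, z1, z2⟩ hA] <;>
      simp only [z0, z1, z2, mul_zero, add_zero, zero_add] at hd ⊢ <;>
      first
        | exact hd
        | (exact hD (a 2) hd)
        | tauto

end

section
variable {w w' : ℤ} {e : X ≃ X}
  (he : ∀ x, uw w' (e x) = uw w x)
  {a : Fin 3 → ℤ} (hd : (49:ℤ) ∣ (a 0 + 6 * a 1 + w * a 2))

include he hd in
lemma Fw_norm : (Fw w' e a 0).natAbs + (Fw w' e a 1).natAbs + (Fw w' e a 2).natAbs =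
    (a 0).natAbs + (a 1).natAbs + (a 2).natAbs := by
  unfold Fw
  split_ifs with hA h1 h2 h3
  · exact main_norm hA.1 hA.2.1 hA.2.2 hd he
  · rfl
  · rw [vec3_0, vec3_1, vec3_2]; omega
  · rw [vec3_0, vec3_1, vec3_2]; omega
  · rfl

end

section
variable {w' : ℤ} {e : X ≃ X} {a : Fin 3 → ℤ}

lemma Fw_eq1 (h : a 0 ≠ 0 ∧ a 1 ≠ 0 ∧ a 2 ≠ 0) : Fw w' e a = mainF w' e a := by
  unfold Fw; rw [if_pos h]

lemma Fw_eq2 (hA : ¬(a 0 ≠ 0 ∧ a 1 ≠ 0 ∧ a 2 ≠ 0)) (h : a 0 ≠ 0 ∧ a 1 ≠ 0) :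
    Fw w' e a = a := by
  unfold Fw; rw [if_neg hA, if_pos h]

lemma Fw_eq3 (hA : ¬(a 0 ≠ 0 ∧ a 1 ≠ 0 ∧ a 2 ≠ 0)) (hB : ¬(a 0 ≠ 0 ∧ a 1 ≠ 0))
    (h : a 0 ≠ 0 ∧ a 2 ≠ 0) : Fw w' e a = ![0, a 2, a 0] := by
  unfold Fw; rw [if_neg hA, if_neg hB, if_pos h]

lemma Fw_eq4 (hA : ¬(a 0 ≠ 0 ∧ a 1 ≠ 0 ∧ a 2 ≠ 0)) (hB : ¬(a 0 ≠ 0 ∧ a 1 ≠ 0))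
    (hC : ¬(a 0 ≠ 0 ∧ a 2 ≠ 0)) (h : a 1 ≠ 0 ∧ a 2 ≠ 0) :
    Fw w' e a = ![a 2, 0, a 1] := by
  unfold Fw; rw [if_neg hA, if_neg hB, if_neg hC, if_pos h]

lemma Fw_eq5 (hB : ¬(a 0 ≠ 0 ∧ a 1 ≠ 0)) (hC : ¬(a 0 ≠ 0 ∧ a 2 ≠ 0))
    (hD : ¬(a 1 ≠ 0 ∧ a 2 ≠ 0)) : Fw w' e a = a := by
  have hA : ¬(a 0 ≠ 0 ∧ a 1 ≠ 0 ∧ a 2 ≠ 0) := by tauto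
  unfold Fw; rw [if_neg hA, if_neg hB, if_neg hC, if_neg hD]

end

section
variable {w w' : ℤ} {e : X ≃ X} {a : Fin 3 → ℤ}
  (hd : (49:ℤ) ∣ (a 0 + 6 * a 1 + w * a 2))

lemma Fw_zc : (Finset.univ.filter fun j => Fw w' e a j = 0).card =
    (Finset.univ.filter fun j => a j = 0).card := by
  by_cases hA : a 0 ≠ 0 ∧ a 1 ≠ 0 ∧ a 2 ≠ 0
  · rw [Fw_eq1 hA, zc_eq, zc_eq, mainF_eq]
    have hb := out_ne hA.1 hA.2.1 hA.2.2 (a := a) w' (e (inX a))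
    rw [if_neg (hb 0), if_neg (hb 1), if_neg (hb 2),
      if_neg hA.1, if_neg hA.2.1, if_neg hA.2.2]
  · by_cases h1 : a 0 ≠ 0 ∧ a 1 ≠ 0
    · rw [Fw_eq2 hA h1]
    · by_cases h2 : a 0 ≠ 0 ∧ a 2 ≠ 0
      · have ha1 : a 1 = 0 := by tauto
        rw [Fw_eq3 hA h1 h2, zc_eq, zc_eq, vec3_0, vec3_1, vec3_2,
          if_pos rfl, if_pos ha1, if_neg h2.1, if_neg h2.2]
      · by_cases h3 : a 1 ≠ 0 ∧ a 2 ≠ 0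
        · have ha0 : a 0 = 0 := by tauto
          rw [Fw_eq4 hA h1 h2 h3, zc_eq, zc_eq, vec3_0, vec3_1, vec3_2,
            if_pos rfl, if_pos ha0, if_neg h3.1, if_neg h3.2]
        · rw [Fw_eq5 h1 h2 h3]

include hd in
lemma Fw_inv : Fw w e.symm (Fw w' e a) = a := by
  by_cases hA : a 0 ≠ 0 ∧ a 1 ≠ 0 ∧ a 2 ≠ 0
  · rw [Fw_eq1 hA]
    have hb := out_ne hA.1 hA.2.1 hA.2.2 (a := a) w' (e (inX a))
    have hb' : mainF w' e a 0 ≠ 0 ∧ mainF w' e a 1 ≠ 0 ∧ mainF w' e a 2 ≠ 0 := by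
      rw [mainF_eq]; exact ⟨hb 0, hb 1, hb 2⟩
    rw [Fw_eq1 hb']
    exact main_main hA.1 hA.2.1 hA.2.2 hd
  · by_cases h1 : a 0 ≠ 0 ∧ a 1 ≠ 0
    · rw [Fw_eq2 hA h1, Fw_eq2 hA h1]
    · by_cases h2 : a 0 ≠ 0 ∧ a 2 ≠ 0
      · have ha1 : a 1 = 0 := by tauto
        rw [Fw_eq3 hA h1 h2]
        have c1 : ¬((![0, a 2, a 0]) 0 ≠ 0 ∧ (![0, a 2, a 0]) 1 ≠ 0 ∧
            (![0, a 2, a 0]) 2 ≠ 0) := by rw [vec3_0]; tauto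
        have c2 : ¬((![0, a 2, a 0]) 0 ≠ 0 ∧ (![0, a 2, a 0]) 1 ≠ 0) := by
          rw [vec3_0]; tauto
        have c3 : ¬((![0, a 2, a 0]) 0 ≠ 0 ∧ (![0, a 2, a 0]) 2 ≠ 0) := by
          rw [vec3_0]; tauto
        have c4 : (![0, a 2, a 0]) 1 ≠ 0 ∧ (![0, a 2, a 0]) 2 ≠ 0 := by
          rw [vec3_1, vec3_2]; exact ⟨h2.2, h2.1⟩
        rw [Fw_eq4 c1 c2 c3 c4]
        funext j
        fin_cases j
        · show a 0 = a 0; rfl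
        · show (0:ℤ) = a 1; omega
        · show a 2 = a 2; rfl
      · by_cases h3 : a 1 ≠ 0 ∧ a 2 ≠ 0
        · have ha0 : a 0 = 0 := by tauto
          rw [Fw_eq4 hA h1 h2 h3]
          have c1 : ¬((![a 2, 0, a 1]) 0 ≠ 0 ∧ (![a 2, 0, a 1]) 1 ≠ 0 ∧
              (![a 2, 0, a 1]) 2 ≠ 0) := by rw [vec3_1]; tauto
          have c2 : ¬((![a 2, 0, a 1]) 0 ≠ 0 ∧ (![a 2, 0, a 1]) 1 ≠ 0) := by
            rw [vec3_1]; tauto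
          have c3 : (![a 2, 0, a 1]) 0 ≠ 0 ∧ (![a 2, 0, a 1]) 2 ≠ 0 := by
            rw [vec3_0, vec3_2]; exact ⟨h3.2, h3.1⟩
          rw [Fw_eq3 c1 c2 c3]
          funext j
          fin_cases j
          · show (0:ℤ) = a 0; omega
          · show a 1 = a 1; rfl
          · show a 2 = a 2; rfl
        · rw [Fw_eq5 h1 h2 h3, Fw_eq5 h1 h2 h3]

end

/-! ### Instantiations -/

lemma hB1520 : ∀ u v : ℤ, (49:ℤ) ∣ u + 15 * v → (49:ℤ) ∣ 6 * v + 20 * u := by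
  intro u v h; omega
lemma hC1520 : ∀ u v : ℤ, (49:ℤ) ∣ 6 * u + 15 * v → (49:ℤ) ∣ v + 20 * u := by
  intro u v h; omega
lemma hD1520 : ∀ v : ℤ, (49:ℤ) ∣ 15 * v → (49:ℤ) ∣ 20 * v := by
  intro v h; omega
lemma hB2015 : ∀ u v : ℤ, (49:ℤ) ∣ u + 20 * v → (49:ℤ) ∣ 6 * v + 15 * u := by
  intro u v h; omega
lemma hC2015 : ∀ u v : ℤ, (49:ℤ) ∣ 6 * u + 20 * v → (49:ℤ) ∣ v + 15 * u := by
  intro u v h; omega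
lemma hD2015 : ∀ v : ℤ, (49:ℤ) ∣ 20 * v → (49:ℤ) ∣ 15 * v := by
  intro v h; omega

lemma isospectral (k z : ℕ) :
    {a : Fin 3 → ℤ | (49 : ℤ) ∣ (a 0 * 1 + a 1 * 6 + a 2 * 15) ∧
        (a 0).natAbs + (a 1).natAbs + (a 2).natAbs = k ∧
        (Finset.univ.filter (fun j => a j = 0)).card = z}.ncard =
    {a : Fin 3 → ℤ | (49 : ℤ) ∣ (a 0 * 1 + a 1 * 6 + a 2 * 20) ∧
        (a 0).natAbs + (a 1).natAbs + (a 2).natAbs = k ∧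
        (Finset.univ.filter (fun j => a j = 0)).card = z}.ncard := by
  have cast15 : ∀ a : Fin 3 → ℤ, a 0 * 1 + a 1 * 6 + a 2 * 15 =
      a 0 + 6 * a 1 + 15 * a 2 := fun a => by ring
  have cast20 : ∀ a : Fin 3 → ℤ, a 0 * 1 + a 1 * 6 + a 2 * 20 =
      a 0 + 6 * a 1 + 20 * a 2 := fun a => by ring
  have himg : {a : Fin 3 → ℤ | (49 : ℤ) ∣ (a 0 * 1 + a 1 * 6 + a 2 * 20) ∧
      (a 0).natAbs + (a 1).natAbs + (a 2).natAbs = k ∧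
      (Finset.univ.filter (fun j => a j = 0)).card = z} =
      (Fw 20 gma) '' {a : Fin 3 → ℤ | (49 : ℤ) ∣ (a 0 * 1 + a 1 * 6 + a 2 * 15) ∧
      (a 0).natAbs + (a 1).natAbs + (a 2).natAbs = k ∧
      (Finset.univ.filter (fun j => a j = 0)).card = z} := by
    ext b
    simp only [Set.mem_image, Set.mem_setOf_eq]
    constructor
    · rintro ⟨hdvd, hnorm, hzc⟩
      rw [cast20] at hdvd
      refine ⟨Fw 15 gma.symm b, ⟨?_, ?_, ?_⟩, ?_⟩
      · rw [cast15]
        exact Fw_mem hB2015 hC2015 hD2015 hdvd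
      · rw [Fw_norm gma_symm_spec hdvd]; exact hnorm
      · rw [Fw_zc (w' := 15) (e := gma.symm) (a := b)]; exact hzc
      · have := Fw_inv (w := 20) (w' := 15) (e := gma.symm) hdvd
        rwa [Equiv.symm_symm] at this
    · rintro ⟨a, ⟨hdvd, hnorm, hzc⟩, rfl⟩
      rw [cast15] at hdvd
      refine ⟨?_, ?_, ?_⟩
      · rw [cast20]
        exact Fw_mem hB1520 hC1520 hD1520 hdvd
      · rw [Fw_norm gma_spec hdvd]; exact hnorm
      · rw [Fw_zc (w' := 20) (e := gma) (a := a)]; exact hzc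
  rw [himg]
  rw [Set.ncard_image_of_injOn]
  intro x hx y hy hxy
  have hdx : (49:ℤ) ∣ (x 0 + 6 * x 1 + 15 * x 2) := by
    rw [← cast15]; exact hx.1
  have hdy : (49:ℤ) ∣ (y 0 + 6 * y 1 + 15 * y 2) := by
    rw [← cast15]; exact hy.1
  have := congrArg (Fw 15 gma.symm) hxy
  rwa [Fw_inv (w := 15) (w' := 20) (e := gma) hdx,
    Fw_inv (w := 15) (w' := 20) (e := gma) hdy] at this

/-! ### Non-isometry -/

lemma nonisometric : ¬ ∃ (t' : ℤ) (_ : IsCoprime t' (49 : ℤ)) (ε : Fin 3 → ℤ)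
    (_ : ∀ j, ε j = 1 ∨ ε j = -1) (σ : Equiv.Perm (Fin 3)),
    ∀ j, (49 : ℤ) ∣ (![1, 6, 15] j - ε j * t' * (![1, 6, 20] (σ j))) := by
  rintro ⟨t, -, ε, hε, σ, hdvd⟩
  have main : ∀ (u : ZMod 49) (b : Fin 3 → Bool) (τ : Equiv.Perm (Fin 3)),
      ¬ (∀ j : Fin 3, (![1, 6, 15] : Fin 3 → ZMod 49) j =
        (if b j then (1 : ZMod 49) else -1) * u * (![1, 6, 20] : Fin 3 → ZMod 49) (τ j)) := by
    decide
  apply main ((t : ℤ) : ZMod 49) (fun j => decide (ε j = 1)) σ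
  intro j
  have h := (ZMod.intCast_zmod_eq_zero_iff_dvd _ 49).mpr (hdvd j)
  push_cast at h
  have hv1 : ((![1, 6, 15] j : ℤ) : ZMod 49) = (![1, 6, 15] : Fin 3 → ZMod 49) j := by
    fin_cases j <;> simp
  have hv2 : ((![1, 6, 20] (σ j) : ℤ) : ZMod 49) = (![1, 6, 20] : Fin 3 → ZMod 49) (σ j) := by
    have := σ j
    generalize σ j = i at *
    fin_cases i <;> simp
  have hεc : ((ε j : ℤ) : ZMod 49) = (if decide (ε j = 1) then (1 : ZMod 49) else -1) := by
    rcases hε j with h1 | h1 <;> rw [h1] <;> simp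
  rw [hv1, hv2, hεc] at h
  linear_combination h

end Lattice49

/-- The congruence lattices `𝓛(49; 1, 6, 15)` and `𝓛(49; 1, 6, 20)` in `ℤ³` are
`‖·‖₁*`-isospectral (same number of vectors of each one-norm with each number of zero
coordinates) but not `‖·‖₁`-isometric (no unit multiple, signs and permutation mod 49
carries `(1,6,15)` to `(1,6,20)`). -/
theorem lattice_49_example :
    (∀ k z : ℕ,
      {a : Fin 3 → ℤ | (49 : ℤ) ∣ (a 0 * 1 + a 1 * 6 + a 2 * 15) ∧
          (a 0).natAbs + (a 1).natAbs + (a 2).natAbs = k ∧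
          (Finset.univ.filter (fun j => a j = 0)).card = z}.ncard =
      {a : Fin 3 → ℤ | (49 : ℤ) ∣ (a 0 * 1 + a 1 * 6 + a 2 * 20) ∧
          (a 0).natAbs + (a 1).natAbs + (a 2).natAbs = k ∧
          (Finset.univ.filter (fun j => a j = 0)).card = z}.ncard) ∧
    ¬ ∃ (t' : ℤ) (_ : IsCoprime t' (49 : ℤ)) (ε : Fin 3 → ℤ)
        (_ : ∀ j, ε j = 1 ∨ ε j = -1) (σ : Equiv.Perm (Fin 3)),
      ∀ j, (49 : ℤ) ∣ (![1, 6, 15] j - ε j * t' * (![1, 6, 20] (σ j))) :=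
  ⟨Lattice49.isospectral, Lattice49.nonisometric⟩
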